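/- Let H be a complex Hilbert space of finite dimension n > 2k, and let f : G_k(H) → G_k(H) preserve orthogonality in both directions. If X_1,…,X_i, Y ∈ G_k(H) are mutually distinct, Y is not contained in X_1 + … + X_i, and dim(X_1 + … + X_i) ≤ n − k, then f(Y) is not contained in f(X_1) + … + f(X_i). -/

import Mathlib

open Module Submodule

private lemma aux_exists_intermediate {K V : Type*} [Field K] [AddCommGroup V] [Module K V]
    [FiniteDimensional K V] :
    ∀ (d : ℕ) (W V' : Submodule K V) (k : ℕ), W ≤ V' → finrank K W ≤ k →
      k ≤ finrank K V' → k - finrank K W ≤ d →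
      ∃ Z : Submodule K V, W ≤ Z ∧ Z ≤ V' ∧ finrank K Z = k := by
  intro d
  induction d with
  | zero =>
    intro W V' k hWV' h1 h2 h3
    exact ⟨W, le_rfl, hWV', by omega⟩
  | succ d ih =>
    intro W V' k hWV' h1 h2 h3
    by_cases heq : finrank K W = k
    · exact ⟨W, le_rfl, hWV', heq⟩
    · have hlt : finrank K W < k := lt_of_le_of_ne h1 heq
      have hWne : W ≠ V' := by
        rintro rfl; omega
      obtain ⟨m, hmV', hmW⟩ := SetLike.exists_of_lt (lt_of_le_of_ne hWV' hWne)
      have hm0 : m ≠ 0 := by rintro rfl; exact hmW W.zero_mem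
      set W' := W ⊔ span K {m} with hW'
      have hWW' : W < W' := by
        refine lt_of_le_of_ne le_sup_left ?_
        intro h
        exact hmW (h ▸ Submodule.mem_sup_right (mem_span_singleton_self m))
      have hW'V' : W' ≤ V' := sup_le hWV' ((span_singleton_le_iff_mem m V').mpr hmV')
      have hle : finrank K W' ≤ finrank K W + 1 := by
        have h := Submodule.finrank_sup_add_finrank_inf_eq W (span K {m})
        rw [finrank_span_singleton hm0, ← hW'] at h
        omega
      have hlt' : finrank K W < finrank K W' := Submodule.finrank_lt_finrank_of_lt hWW'
      have hW'rank : finrank K W' = finrank K W + 1 := by omega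
      obtain ⟨Z, hZ1, hZ2, hZ3⟩ := ih W' V' k hW'V' (by omega) h2 (by omega)
      exact ⟨Z, le_trans hWW'.le hZ1, hZ2, hZ3⟩

theorem stmt_18 {H : Type*} [NormedAddCommGroup H] [InnerProductSpace ℂ H]
    [FiniteDimensional ℂ H] {n k : ℕ} (hn : Module.finrank ℂ H = n) (hdim : 2 * k < n)
    (f : {X : Submodule ℂ H // Module.finrank ℂ ↥X = k} →
         {X : Submodule ℂ H // Module.finrank ℂ ↥X = k})
    (horth : ∀ X Y, (X.1 ⟂ Y.1 ↔ (f X).1 ⟂ (f Y).1))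
    {i : ℕ} (X : Fin i → {X : Submodule ℂ H // Module.finrank ℂ ↥X = k})
    (Y : {X : Submodule ℂ H // Module.finrank ℂ ↥X = k})
    (hXinj : Function.Injective X) (hXY : ∀ j, X j ≠ Y)
    (hYnle : ¬ Y.1 ≤ ⨆ j, (X j).1)
    (hsum : Module.finrank ℂ ↥(⨆ j, (X j).1) ≤ n - k) :
    ¬ (f Y).1 ≤ ⨆ j, (f (X j)).1 := by
  intro hle
  set S : Submodule ℂ H := ⨆ j, (X j).1 with hS
  -- k ≥ 1, else Y = ⊥ ≤ S, contradiction
  have hk1 : 1 ≤ k := by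
    rcases Nat.eq_zero_or_pos k with hk0 | hk
    · exfalso
      apply hYnle
      have : Y.1 = ⊥ := Submodule.finrank_eq_zero.mp (Y.2.trans hk0)
      rw [this]; exact bot_le
    · exact hk
  -- dimension of the orthogonal complement of S
  have hSorth : finrank ℂ S + finrank ℂ Sᗮ = n := by
    rw [← hn]; exact Submodule.finrank_add_finrank_orthogonal S
  have hkS : k ≤ finrank ℂ Sᗮ := by omega
  -- find y ∈ Y, y ∉ S
  obtain ⟨y, hyY, hyS⟩ := SetLike.not_le_iff_exists.mp hYnle
  -- b : component of y orthogonal to S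
  set b : H := y - (orthogonalProjection S y : H) with hb
  have hbS : b ∈ Sᗮ := Submodule.sub_starProjection_mem_orthogonal (K := S) y
  have hb0 : b ≠ 0 := by
    intro h
    apply hyS
    have : y = (orthogonalProjection S y : H) := by
      have := sub_eq_zero.mp (hb ▸ h)
      exact this
    rw [this]; exact (orthogonalProjection S y).2
  have hinner : inner ℂ b y ≠ (0 : ℂ) := by
    have h1 : inner ℂ b ((orthogonalProjection S y : H)) = (0 : ℂ) :=
      inner_eq_zero_symm.mp (hbS (orthogonalProjection S y : H) (orthogonalProjection S y).2)
    have : inner ℂ b y = (inner ℂ b b : ℂ) := by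
      have : y = (orthogonalProjection S y : H) + b := by simp [hb]
      rw [this, inner_add_right, h1, zero_add]
    rw [this]
    exact fun h => hb0 (inner_self_eq_zero.mp h)
  -- find Z with span b ≤ Z ≤ Sᗮ, finrank Z = k
  have hspanb : span ℂ {b} ≤ Sᗮ := (span_singleton_le_iff_mem b Sᗮ).mpr hbS
  have hspanrank : finrank ℂ (span ℂ {b}) = 1 := finrank_span_singleton hb0
  obtain ⟨Z, hZ1, hZ2, hZ3⟩ := aux_exists_intermediate (k - 1) (span ℂ {b}) Sᗮ k hspanb
    (by omega) hkS (by omega)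
  set Z' : {X : Submodule ℂ H // Module.finrank ℂ ↥X = k} := ⟨Z, hZ3⟩ with hZ'
  -- Z is orthogonal to each X j
  have h1 : ∀ j, Z'.1 ⟂ (X j).1 := by
    intro j
    rw [Submodule.isOrtho_iff_le]
    exact le_trans hZ2 (Submodule.orthogonal_le (le_iSup (fun j => (X j).1) j))
  have h2 : ∀ j, (f Z').1 ⟂ (f (X j)).1 := fun j => (horth Z' (X j)).mp (h1 j)
  have h3 : (f Z').1 ⟂ ⨆ j, (f (X j)).1 := Submodule.isOrtho_iSup_right.mpr h2
  have h4 : (f Z').1 ⟂ (f Y).1 := h3.mono_right hle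
  have h5 : Z'.1 ⟂ Y.1 := (horth Z' Y).mpr h4
  have hbZ : b ∈ Z := hZ1 (mem_span_singleton_self b)
  exact hinner (Submodule.isOrtho_iff_inner_eq.mp h5 b hbZ y hyY)
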